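/- Let a_{j,f} be finitely many algebraic numbers, indexed by pairs (j,f) with j ∈ ℤ, such that every complex conjugate of a_{j,f} has absolute value q^{(j − 2N)/2} for a fixed prime power q and integer N, and suppose Σ_j (−1)^j Σ_f a_{j,f}^m = Π(q^m) for all integers m ≥ 1, where Π is a polynomial with nonnegative integer coefficients. Then a_{j,f} exists only for even j, and each a_{j,f} with j even equals q^{j/2 − N}. -/

import Mathlib

open Finset Polynomial

/-- Linear independence of `m ↦ b ^ m` (for `m ≥ 1`) for distinct nonzero `b`. -/
private lemma indep_lemma (T : Finset ℂ) (c : ℂ → ℂ) (h0 : ∀ b ∈ T, b ≠ 0)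
    (h : ∀ m : ℕ, 1 ≤ m → ∑ b ∈ T, c b * b ^ m = 0) :
    ∀ b ∈ T, c b = 0 := by
  intro b₀ hb₀
  set p : Polynomial ℂ := X * ∏ b ∈ T.erase b₀, (X - C b) with hp
  have hc0 : p.coeff 0 = 0 := by
    rw [coeff_zero_eq_eval_zero]
    simp [hp]
  have h1 : ∑ b ∈ T, c b * p.eval b = 0 := by
    calc ∑ b ∈ T, c b * p.eval b
        = ∑ b ∈ T, ∑ m ∈ range (p.natDegree + 1), p.coeff m * (c b * b ^ m) := by
          refine Finset.sum_congr rfl fun b _ => ?_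
          rw [p.eval_eq_sum_range, Finset.mul_sum]
          exact Finset.sum_congr rfl fun m _ => by ring
      _ = ∑ m ∈ range (p.natDegree + 1), p.coeff m * ∑ b ∈ T, c b * b ^ m := by
          rw [Finset.sum_comm]
          exact Finset.sum_congr rfl fun m _ => by rw [Finset.mul_sum]
      _ = 0 := by
          refine Finset.sum_eq_zero fun m _ => ?_
          rcases Nat.eq_zero_or_pos m with rfl | hm
          · rw [hc0, zero_mul]
          · rw [h m hm, mul_zero]
  have h2 : ∑ b ∈ T, c b * p.eval b = c b₀ * p.eval b₀ := by
    refine Finset.sum_eq_single b₀ (fun b hb hne => ?_) (fun hh => absurd hb₀ hh)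
    have hz : p.eval b = 0 := by
      simp only [hp, eval_mul, eval_X, eval_prod, eval_sub, eval_C]
      rw [Finset.prod_eq_zero (Finset.mem_erase.mpr ⟨hne, hb⟩) (by ring), mul_zero]
    rw [hz, mul_zero]
  have h3 : p.eval b₀ ≠ 0 := by
    simp only [hp, eval_mul, eval_X, eval_prod, eval_sub, eval_C]
    refine mul_ne_zero (h0 b₀ hb₀) (Finset.prod_ne_zero_iff.mpr fun b hb => ?_)
    exact sub_ne_zero.mpr (Ne.symm (Finset.mem_erase.mp hb).1)
  have := h2.symm.trans h1
  exact (mul_eq_zero.mp this).resolve_right h3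

/-- Purity argument from Proposition 35.18: algebraic numbers `a i` (with weights
`j i ∈ ℤ`) all of whose conjugates have absolute value `√q ^ (j i − 2N)`, satisfying
`Σ_i (−1)^{j i} (a i)^m = Π(q^m)` for all `m ≥ 1` with `Π` a polynomial with
nonnegative integer coefficients, must have every `j i` even and `a i = q^{j i/2 − N}`. -/
theorem stmt_15 {ι : Type*} [Fintype ι] (q : ℕ)
    (hq : ∃ p n : ℕ, p.Prime ∧ 0 < n ∧ q = p ^ n)
    (N : ℤ) (j : ι → ℤ) (a : ι → ℂ)
    (halg : ∀ i, IsAlgebraic ℚ (a i))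
    (habs : ∀ i, ∀ b : ℂ, Polynomial.aeval b (minpoly ℚ (a i)) = 0 →
      ‖b‖ = Real.sqrt q ^ (j i - 2 * N))
    (P : Polynomial ℕ)
    (hsum : ∀ m : ℕ, 1 ≤ m →
      ∑ i : ι, (-1 : ℂ) ^ (j i) * a i ^ m = ((P.eval (q ^ m) : ℕ) : ℂ)) :
    ∀ i, Even (j i) ∧ a i = (q : ℂ) ^ (j i / 2 - N) := by
  obtain ⟨pp, n, hpp, hn, hqe⟩ := hq
  have hq2 : 2 ≤ q := by
    subst hqe
    calc 2 = 2 ^ 1 := by norm_num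
      _ ≤ 2 ^ n := Nat.pow_le_pow_right (by norm_num) hn
      _ ≤ pp ^ n := Nat.pow_le_pow_left hpp.two_le n
  have hq1 : (1 : ℝ) < q := by exact_mod_cast lt_of_lt_of_le one_lt_two (by exact_mod_cast hq2)
  have hq0 : (0 : ℝ) < q := lt_trans one_pos hq1
  have hs1 : (1 : ℝ) < Real.sqrt q := by
    rw [show (1 : ℝ) = Real.sqrt 1 from Real.sqrt_one.symm]
    exact Real.sqrt_lt_sqrt (by norm_num) hq1
  have hs0 : (0 : ℝ) < Real.sqrt q := lt_trans one_pos hs1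
  have habsa : ∀ i, ‖a i‖ = Real.sqrt q ^ (j i - 2 * N) := fun i =>
    habs i (a i) (minpoly.aeval ℚ (a i))
  have ha0 : ∀ i, a i ≠ 0 := by
    intro i h
    have := habsa i
    rw [h, norm_zero] at this
    exact absurd this.symm (ne_of_gt (zpow_pos hs0 _))
  set T : Finset ℂ := (Finset.univ.image a) ∪ (P.support.image fun k => (q : ℂ) ^ k) with hT
  set c : ℂ → ℂ := fun b =>
    (∑ i ∈ Finset.univ.filter fun i => a i = b, (-1 : ℂ) ^ (j i)) -
      ∑ k ∈ P.support.filter fun k => (q : ℂ) ^ k = b, (P.coeff k : ℂ) with hc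
  have h0 : ∀ b ∈ T, b ≠ 0 := by
    intro b hb
    rcases Finset.mem_union.mp hb with hb | hb
    · obtain ⟨i, _, rfl⟩ := Finset.mem_image.mp hb
      exact ha0 i
    · obtain ⟨k, _, rfl⟩ := Finset.mem_image.mp hb
      exact pow_ne_zero k (by exact_mod_cast (show q ≠ 0 by omega))
  have hmem : ∀ i, a i ∈ T := fun i =>
    Finset.mem_union_left _ (Finset.mem_image_of_mem a (Finset.mem_univ i))
  have hrel : ∀ m : ℕ, 1 ≤ m → ∑ b ∈ T, c b * b ^ m = 0 := by
    intro m hm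
    have e1 : ∑ b ∈ T, (∑ i ∈ Finset.univ.filter fun i => a i = b, (-1 : ℂ) ^ (j i)) * b ^ m
        = ∑ i : ι, (-1 : ℂ) ^ (j i) * a i ^ m := by
      rw [← Finset.sum_fiberwise_of_maps_to (fun i _ => hmem i)
        (fun i => (-1 : ℂ) ^ (j i) * a i ^ m)]
      refine Finset.sum_congr rfl fun b _ => ?_
      rw [Finset.sum_mul]
      refine Finset.sum_congr rfl fun i hi => ?_
      rw [(Finset.mem_filter.mp hi).2]
    have e2 : ∑ b ∈ T, (∑ k ∈ P.support.filter fun k => (q : ℂ) ^ k = b, (P.coeff k : ℂ)) * b ^ m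
        = ((P.eval (q ^ m) : ℕ) : ℂ) := by
      have hmem2 : ∀ k ∈ P.support, (q : ℂ) ^ k ∈ T := fun k hk =>
        Finset.mem_union_right _ (Finset.mem_image_of_mem _ hk)
      calc ∑ b ∈ T, (∑ k ∈ P.support.filter fun k => (q : ℂ) ^ k = b, (P.coeff k : ℂ)) * b ^ m
          = ∑ b ∈ T, ∑ k ∈ P.support.filter (fun k => (q : ℂ) ^ k = b),
              (P.coeff k : ℂ) * ((q : ℂ) ^ k) ^ m := by
            refine Finset.sum_congr rfl fun b _ => ?_
            rw [Finset.sum_mul]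
            refine Finset.sum_congr rfl fun k hk => ?_
            rw [(Finset.mem_filter.mp hk).2]
        _ = ∑ k ∈ P.support, (P.coeff k : ℂ) * ((q : ℂ) ^ k) ^ m :=
            Finset.sum_fiberwise_of_maps_to hmem2 _
        _ = ((P.eval (q ^ m) : ℕ) : ℂ) := by
            rw [Polynomial.eval_eq_sum, Polynomial.sum_def]
            push_cast
            refine Finset.sum_congr rfl fun k _ => ?_
            rw [← pow_mul, ← pow_mul, Nat.mul_comm]
    simp only [hc, ← Finset.sum_sub_distrib]
    calc ∑ b ∈ T, ((∑ i ∈ Finset.univ.filter fun i => a i = b, (-1 : ℂ) ^ (j i)) -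
            ∑ k ∈ P.support.filter fun k => (q : ℂ) ^ k = b, (P.coeff k : ℂ)) * b ^ m
        = ∑ b ∈ T, ((∑ i ∈ Finset.univ.filter fun i => a i = b, (-1 : ℂ) ^ (j i)) * b ^ m -
            (∑ k ∈ P.support.filter fun k => (q : ℂ) ^ k = b, (P.coeff k : ℂ)) * b ^ m) := by
          refine Finset.sum_congr rfl fun b _ => ?_; ring
      _ = 0 := by rw [Finset.sum_sub_distrib, e1, e2, hsum m hm, sub_self]
  intro i
  have hci : c (a i) = 0 := indep_lemma T c h0 hrel (a i) (hmem i)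
  -- all indices in the fiber of `a i` have the same weight
  have hjeq : ∀ i' , a i' = a i → j i' = j i := by
    intro i' he
    have h1 := habsa i'
    have h2 := habsa i
    rw [he, h2] at h1
    have := zpow_right_injective₀ hs0 (ne_of_gt hs1) h1
    omega
  set F1 := Finset.univ.filter fun i' => a i' = a i with hF1
  set F2 := P.support.filter fun k => (q : ℂ) ^ k = a i with hF2
  have hfib : ∑ i' ∈ F1, (-1 : ℂ) ^ (j i') = (F1.card : ℂ) * (-1 : ℂ) ^ (j i) := by
    rw [Finset.sum_congr rfl fun i' hi' => by
      rw [hjeq i' (Finset.mem_filter.mp hi').2]]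
    rw [Finset.sum_const, nsmul_eq_mul]
  have hS : ∑ k ∈ F2, (P.coeff k : ℂ) = ((∑ k ∈ F2, P.coeff k : ℕ) : ℂ) := by push_cast; rfl
  have hiF1 : i ∈ F1 := Finset.mem_filter.mpr ⟨Finset.mem_univ i, rfl⟩
  have hcard : 1 ≤ F1.card := Finset.card_pos.mpr ⟨i, hiF1⟩
  have hkey : (F1.card : ℂ) * (-1 : ℂ) ^ (j i) = ((∑ k ∈ F2, P.coeff k : ℕ) : ℂ) := by
    have := hci
    simp only [hc] at this
    rw [← hF1, ← hF2] at this
    rw [← hfib, ← hS]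
    linear_combination this
  have heven : Even (j i) := by
    by_contra hodd
    rw [Int.not_even_iff_odd] at hodd
    rw [hodd.neg_one_zpow] at hkey
    have : ((F1.card + (∑ k ∈ F2, P.coeff k) : ℕ) : ℂ) = 0 := by
      push_cast; linear_combination hS - hkey
    have := Nat.cast_eq_zero.mp this
    omega
  refine ⟨heven, ?_⟩
  rw [heven.neg_one_zpow, mul_one] at hkey
  have hne : (∑ k ∈ F2, P.coeff k) ≠ 0 := by
    intro h
    rw [h] at hkey
    have : F1.card = 0 := Nat.cast_eq_zero.mp (by exact_mod_cast hkey)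
    omega
  have hF2ne : F2.Nonempty := by
    by_contra h
    rw [Finset.not_nonempty_iff_eq_empty] at h
    exact hne (by rw [h, Finset.sum_empty])
  obtain ⟨k, hk⟩ := hF2ne
  have hak : (q : ℂ) ^ k = a i := (Finset.mem_filter.mp hk).2
  -- compute the exponent
  obtain ⟨t, ht⟩ := heven
  have habs1 : ‖a i‖ = (q : ℝ) ^ (k : ℤ) := by
    rw [← hak, norm_pow, Complex.norm_natCast, ← zpow_natCast]
  have habs2 : ‖a i‖ = (q : ℝ) ^ (t - N) := by
    rw [habsa i]
    have : j i - 2 * N = 2 * (t - N) := by omega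
    rw [this, zpow_mul]
    congr 1
    rw [show ((2:ℤ)) = ((2:ℕ) : ℤ) from rfl, zpow_natCast, Real.sq_sqrt hq0.le]
  have hkt : (k : ℤ) = t - N := by
    apply zpow_right_injective₀ hq0 (ne_of_gt hq1)
    show (q : ℝ) ^ (k : ℤ) = (q : ℝ) ^ (t - N)
    rw [← habs1, habs2]
  have hj2 : j i / 2 - N = (k : ℤ) := by omega
  rw [hj2, zpow_natCast, hak]
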